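/- In the secure-delivery setup, suppose the family (W_ρ)_{ρ∈S} of n×n PSD matrices is R1-feasible with rank(W_ρ) ≤ 1 for every ρ ∈ S, and let (w_ρ)_{ρ∈S} be vectors in ℂⁿ with W_ρ = w_ρ w_ρᴴ for every ρ. Then (w_ρ)_{ρ∈S} is R0-feasible and Σ_{ρ∈S} ‖w_ρ‖² = Σ_{ρ∈S} tr(W_ρ). -/

import Mathlib

open Matrix ComplexOrder Finset

/-- Outer product `w wᴴ` of a complex column vector with its conjugate transpose. -/
def outerProd {n : ℕ} (w : Fin n → ℂ) : Matrix (Fin n) (Fin n) ℂ :=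
  Matrix.vecMulVec w (star w)

/-- R0-feasibility of a family of beamforming vectors `(w_ρ)_{ρ ∈ S}`:
per-BS big-M power constraints C4, per-BS power constraints C5, the QoS
constraints C6 in affine form, and the secrecy constraints C7. -/
def R0Feasible {n Ne : ℕ} {M S : Type*} [Fintype M] [Fintype S] [DecidableEq S]
    (Λ : M → Matrix (Fin n) (Fin n) ℂ) (P : M → ℝ) (q : M → S → ℝ)
    (hch : S → Fin n → ℂ) (G : Matrix (Fin n) (Fin Ne) ℂ)
    (σ2 σe2 : ℝ) (κreq κtol : S → ℝ) (w : S → Fin n → ℂ) : Prop :=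
  (∀ m ρ, (star (w ρ) ⬝ᵥ (Λ m) *ᵥ (w ρ)).re ≤ q m ρ * P m) ∧
  (∀ m, ∑ ρ : S, (star (w ρ) ⬝ᵥ (Λ m) *ᵥ (w ρ)).re ≤ P m) ∧
  (∀ ρ : S, σ2 + ∑ ρ' ∈ Finset.univ.erase ρ, ‖star (hch ρ) ⬝ᵥ w ρ'‖ ^ 2
      ≤ (κreq ρ)⁻¹ * ‖star (hch ρ) ⬝ᵥ w ρ‖ ^ 2) ∧
  (∀ ρ : S, ((1 : Matrix (Fin Ne) (Fin Ne) ℂ)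
      + ((σe2⁻¹ : ℝ) : ℂ) • (Gᴴ * outerProd (w ρ) * G)).det
        ≤ ((1 + κtol ρ : ℝ) : ℂ))

/-- R1-feasibility of a family of PSD matrices `(W_ρ)_{ρ ∈ S}`: the SDP
relaxation of R0 with constraints C4–C7 rewritten linearly in `W_ρ`. -/
def R1Feasible {n Ne : ℕ} {M S : Type*} [Fintype M] [Fintype S] [DecidableEq S]
    (Λ : M → Matrix (Fin n) (Fin n) ℂ) (P : M → ℝ) (q : M → S → ℝ)
    (hch : S → Fin n → ℂ) (G : Matrix (Fin n) (Fin Ne) ℂ)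
    (σ2 σe2 : ℝ) (κreq κtol : S → ℝ) (W : S → Matrix (Fin n) (Fin n) ℂ) : Prop :=
  (∀ ρ : S, (W ρ).PosSemidef) ∧
  (∀ m ρ, ((Λ m * W ρ).trace).re ≤ q m ρ * P m) ∧
  (∀ m, ∑ ρ : S, ((Λ m * W ρ).trace).re ≤ P m) ∧
  (∀ ρ : S, σ2 + ∑ ρ' ∈ Finset.univ.erase ρ, ((W ρ' * outerProd (hch ρ)).trace).re
      ≤ (κreq ρ)⁻¹ * ((W ρ * outerProd (hch ρ)).trace).re) ∧
  (∀ ρ : S, (((σe2 * κtol ρ : ℝ) : ℂ) • (1 : Matrix (Fin Ne) (Fin Ne) ℂ)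
      - Gᴴ * W ρ * G).PosSemidef)

lemma trace_mul_outerProd {n : ℕ} (A : Matrix (Fin n) (Fin n) ℂ) (w : Fin n → ℂ) :
    (A * outerProd w).trace = star w ⬝ᵥ A *ᵥ w := by
  simp only [Matrix.trace, Matrix.diag, Matrix.mul_apply, outerProd, Matrix.vecMulVec_apply,
    dotProduct, Matrix.mulVec, Pi.star_apply, Finset.mul_sum]
  refine Finset.sum_congr rfl fun i _ => Finset.sum_congr rfl fun j _ => by ring

lemma outerProd_mulVec {n : ℕ} (w h : Fin n → ℂ) :
    (outerProd w) *ᵥ h = (star w ⬝ᵥ h) • w := by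
  ext i
  simp only [outerProd, Matrix.mulVec, Matrix.vecMulVec_apply, dotProduct, Pi.star_apply,
    Pi.smul_apply, smul_eq_mul, Finset.sum_mul]
  refine Finset.sum_congr rfl fun j _ => by ring

lemma star_dot {n : ℕ} (w h : Fin n → ℂ) :
    star w ⬝ᵥ h = starRingEnd ℂ (star h ⬝ᵥ w) := by
  simp [dotProduct, map_sum, mul_comm]

lemma outerProd_trace_mul_outerProd {n : ℕ} (w h : Fin n → ℂ) :
    (outerProd w * outerProd h).trace = (‖star h ⬝ᵥ w‖ ^ 2 : ℝ) := by
  rw [trace_mul_outerProd, outerProd_mulVec, dotProduct_smul, smul_eq_mul, mul_comm,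
    star_dot w h, Complex.mul_conj]
  norm_cast
  simp [Complex.normSq_eq_norm_sq]

lemma trace_outerProd_re {n : ℕ} (w : Fin n → ℂ) :
    ((outerProd w).trace).re = ∑ i, ‖w i‖ ^ 2 := by
  simp only [Matrix.trace, Matrix.diag, outerProd, Matrix.vecMulVec_apply, Pi.star_apply,
    Complex.re_sum]
  refine Finset.sum_congr rfl fun i _ => ?_
  rw [Complex.star_def, Complex.mul_conj']
  simp [Complex.normSq_eq_norm_sq, ← Complex.ofReal_pow]

lemma GWG {n Ne : ℕ} (G : Matrix (Fin n) (Fin Ne) ℂ) (w : Fin n → ℂ) :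
    Gᴴ * outerProd w * G = outerProd (Gᴴ *ᵥ w) := by
  ext i j
  simp only [outerProd, Matrix.mul_apply, Matrix.vecMulVec_apply, Matrix.mulVec,
    Matrix.conjTranspose_apply, dotProduct, Pi.star_apply, Finset.sum_mul, Finset.mul_sum,
    star_sum, star_mul', star_star]
  refine Finset.sum_congr rfl fun a _ => Finset.sum_congr rfl fun b _ => by ring

lemma star_dot_self {n : ℕ} (v : Fin n → ℂ) :
    star v ⬝ᵥ v = ((∑ i, ‖v i‖ ^ 2 : ℝ) : ℂ) := by
  push_cast
  simp only [dotProduct, Pi.star_apply]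
  exact Finset.sum_congr rfl fun i _ => Complex.conj_mul' _

lemma det_one_add_smul_outerProd {Ne : ℕ} (c : ℝ) (v : Fin Ne → ℂ) :
    ((1 : Matrix (Fin Ne) (Fin Ne) ℂ) + (c : ℂ) • outerProd v).det
      = 1 + (c : ℂ) * ((∑ i, ‖v i‖ ^ 2 : ℝ) : ℂ) := by
  have h1 : (c : ℂ) • outerProd v = Matrix.vecMulVec ((c : ℂ) • v) (star v) := by
    ext i j
    simp only [outerProd, Matrix.smul_apply, Matrix.vecMulVec_apply, Pi.smul_apply,
      smul_eq_mul]
    ring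
  rw [h1, Matrix.vecMulVec_eq Unit, Matrix.det_one_add_replicateCol_mul_replicateRow]
  rw [dotProduct_smul, smul_eq_mul, star_dot_self]

/-- If `(W_ρ)_{ρ∈S}` is R1-feasible with `rank W_ρ ≤ 1` and `W_ρ = w_ρ w_ρᴴ`
for every `ρ`, then `(w_ρ)_{ρ∈S}` is R0-feasible and
`Σ_ρ ‖w_ρ‖² = Σ_ρ tr W_ρ`. -/
theorem r0Feasible_of_r1Feasible_rank_le_one {M S : Type*}
    [Fintype M] [Fintype S] [DecidableEq S]
    (Nt Ne n : ℕ) (hNt : 0 < Nt) (hNe : 0 < Ne) (hn : n = Fintype.card M * Nt)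
    (Λ : M → Matrix (Fin n) (Fin n) ℂ) (P : M → ℝ) (q : M → S → ℝ)
    (hch : S → Fin n → ℂ) (G : Matrix (Fin n) (Fin Ne) ℂ)
    (σ2 σe2 : ℝ) (κreq κtol : S → ℝ)
    (hΛdiag : ∀ m, ∀ i j : Fin n, i ≠ j → Λ m i j = 0)
    (hΛ01 : ∀ m, ∀ i : Fin n, Λ m i i = 0 ∨ Λ m i i = 1)
    (hΛsum : ∑ m : M, Λ m = 1)
    (hP : ∀ m, 0 < P m) (hq : ∀ m ρ, q m ρ = 0 ∨ q m ρ = 1)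
    (hσ2 : 0 < σ2) (hσe2 : 0 < σe2)
    (hκreq : ∀ ρ, 0 < κreq ρ) (hκtol : ∀ ρ, 0 ≤ κtol ρ)
    (W : S → Matrix (Fin n) (Fin n) ℂ) (w : S → Fin n → ℂ)
    (hW : R1Feasible Λ P q hch G σ2 σe2 κreq κtol W)
    (hrank : ∀ ρ : S, (W ρ).rank ≤ 1)
    (hWw : ∀ ρ : S, W ρ = outerProd (w ρ)) :
    R0Feasible Λ P q hch G σ2 σe2 κreq κtol w ∧
      ∑ ρ : S, ∑ i : Fin n, ‖w ρ i‖ ^ 2 = ∑ ρ : S, ((W ρ).trace).re := by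
  obtain ⟨hW1, hW2, hW3, hW4, hW5⟩ := hW
  have key : ∀ (m : M) (ρ : S), ((Λ m * W ρ).trace).re = (star (w ρ) ⬝ᵥ (Λ m) *ᵥ (w ρ)).re := by
    intro m ρ; rw [hWw, trace_mul_outerProd]
  have key2 : ∀ ρ ρ' : S, ((W ρ' * outerProd (hch ρ)).trace).re
      = ‖star (hch ρ) ⬝ᵥ w ρ'‖ ^ 2 := by
    intro ρ ρ'; rw [hWw, outerProd_trace_mul_outerProd]; norm_cast
  refine ⟨⟨?_, ?_, ?_, ?_⟩, ?_⟩
  · intro m ρ; simp only [← key]; exact hW2 m ρ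
  · intro m; simp only [← key]; exact hW3 m
  · intro ρ; simp only [← key2]; exact hW4 ρ
  · intro ρ
    set v : Fin Ne → ℂ := Gᴴ *ᵥ w ρ with hv
    set t : ℝ := ∑ i, ‖v i‖ ^ 2 with ht
    have htnn : 0 ≤ t := Finset.sum_nonneg fun i _ => by positivity
    have hpsd := (Matrix.posSemidef_iff_dotProduct_mulVec.mp (hW5 ρ)).2 v
    have hGWG : Gᴴ * W ρ * G = outerProd v := by rw [hWw, GWG]
    rw [hGWG] at hpsd
    have hmv : (((σe2 * κtol ρ : ℝ) : ℂ) • (1 : Matrix (Fin Ne) (Fin Ne) ℂ)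
        - outerProd v) *ᵥ v = ((σe2 * κtol ρ : ℝ) : ℂ) • v - ((t : ℝ) : ℂ) • v := by
      rw [Matrix.sub_mulVec, Matrix.smul_mulVec, Matrix.one_mulVec, outerProd_mulVec,
        star_dot_self]
    rw [hmv] at hpsd
    have hdot : star v ⬝ᵥ (((σe2 * κtol ρ : ℝ) : ℂ) • v - ((t : ℝ) : ℂ) • v)
        = (((σe2 * κtol ρ - t) * t : ℝ) : ℂ) := by
      rw [dotProduct_sub, dotProduct_smul, dotProduct_smul, star_dot_self, ← ht]
      simp only [smul_eq_mul]; push_cast; ring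
    rw [hdot] at hpsd
    have hreal : 0 ≤ (σe2 * κtol ρ - t) * t := by
      rwa [← Complex.ofReal_zero, Complex.real_le_real] at hpsd
    have htle : t ≤ σe2 * κtol ρ := by
      rcases eq_or_lt_of_le htnn with h0 | h0
      · rw [← h0]; exact mul_nonneg hσe2.le (hκtol ρ)
      · nlinarith
    rw [GWG, ← hv, det_one_add_smul_outerProd, ← ht]
    have h1 : (1 : ℂ) + ((σe2⁻¹ : ℝ) : ℂ) * ((t : ℝ) : ℂ) = ((1 + σe2⁻¹ * t : ℝ) : ℂ) := by
      push_cast; ring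
    rw [h1, Complex.real_le_real]
    have h2 : σe2⁻¹ * t ≤ κtol ρ := by
      rw [inv_mul_le_iff₀ hσe2]; linarith [htle]
    linarith
  · refine Finset.sum_congr rfl fun ρ _ => ?_
    rw [hWw, trace_outerProd_re]
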